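/- arXiv:1108.5409 — 3 statements merged into one kernel-verified Lean document; each statement's English description precedes it below -/
import Mathlib

section
/- For every real μ ≥ 0 and all real numbers v₀, v₁, v₂, the following identity holds: ((3/2)·v₂ − 2·v₁ + (1/2)·v₀)·v₂ + (μ/2)·v₂² = (1/2)·( |(v₁,v₂)|²_{G(μ)} − (1/(1+μ))·|(v₀,v₁)|²_{G(μ)} ) + ((1+μ)·v₂ − 2·v₁ + v₀)² / (4(1+μ)). -/
/-- The generalized G-quadratic form on ℝ²: the quadratic form of the symmetric
matrix `G(μ)` with rows `(1/2, −1)` and `(−1, 5/2 + μ/2)`. -/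
noncomputable def Gq (μ a b : ℝ) : ℝ := (1/2) * a^2 - 2 * a * b + (5/2 + μ/2) * b^2

/-- The generalized G-stability identity for the 2nd order BDF method (Hill–Süli). -/
theorem G_stability_identity (μ : ℝ) (hμ : 0 ≤ μ) (v₀ v₁ v₂ : ℝ) :
    ((3/2) * v₂ - 2 * v₁ + (1/2) * v₀) * v₂ + (μ/2) * v₂^2 =
      (1/2) * (Gq μ v₁ v₂ - (1/(1+μ)) * Gq μ v₀ v₁)
        + ((1+μ) * v₂ - 2 * v₁ + v₀)^2 / (4*(1+μ)) := by
  have h : (1+μ) ≠ 0 := by linarith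
  unfold Gq
  field_simp
  ring
end

section
/- There exists a constant C_w ≥ 1 such that for all p, q : ℤ² → ℂ with p(0) = q(0) = 0, p(−κ) = conj(p(κ)) and q(−κ) = conj(q(κ)) for all κ, and with ‖p‖_{H¹} < ∞ and ‖q‖_{H¹} < ∞, one has (Σ_{κ≠0} |κ|^{−2} |J(p,q)(κ)|²)^{1/2} ≤ C_w · ‖p‖_{H¹} · ‖q‖_{H¹}. (This is the Wente estimate ‖∇⊥ψ·∇φ‖_{H^{−1}} ≤ C_w‖ψ‖_{H¹}‖φ‖_{H¹} for mean-zero periodic fields.) -/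
/-! Mean-zero real periodic fields on the torus `(0,2π)²` are identified with
their Fourier coefficient sequences `a : ℤ² → ℂ` with `a 0 = 0` and
`a (−κ) = conj (a κ)`. -/

/-- `|κ|² = κ₁² + κ₂²` as a real number. -/
noncomputable def kSq (κ : ℤ × ℤ) : ℝ := ((κ.1^2 + κ.2^2 : ℤ) : ℝ)

/-- The `κ`-th term `|κ|^{2s}·|a(κ)|²` of the squared Sobolev norm `‖a‖²_{H^s}`
(the term at `κ = 0` is zero). -/
noncomputable def sobTerm (s : ℝ) (a : ℤ × ℤ → ℂ) (κ : ℤ × ℤ) : ℝ :=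
  if κ = 0 then 0 else kSq κ ^ s * ‖a κ‖ ^ 2

/-- Finiteness of the Sobolev norm `‖a‖_{H^s}` (i.e. `‖a‖_{H^s} < ∞`). -/
def SobSummable (s : ℝ) (a : ℤ × ℤ → ℂ) : Prop := Summable (sobTerm s a)

/-- The squared Sobolev norm `‖a‖²_{H^s} = Σ_{κ≠0} |κ|^{2s}|a(κ)|²`. -/
noncomputable def sobNormSq (s : ℝ) (a : ℤ × ℤ → ℂ) : ℝ := ∑' κ : ℤ × ℤ, sobTerm s a κ

/-- The Sobolev norm `‖a‖_{H^s}`; `s = 0` is the L² norm `‖a‖`, `s = 1` is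
`‖∇a‖`, and `s = 2` is `‖Δa‖`. -/
noncomputable def sobNorm (s : ℝ) (a : ℤ × ℤ → ℂ) : ℝ := Real.sqrt (sobNormSq s a)

/-- The coefficient sequence of a mean-zero real periodic field. -/
def MeanZeroField (a : ℤ × ℤ → ℂ) : Prop :=
  a 0 = 0 ∧ ∀ κ : ℤ × ℤ, a (-κ) = starRingEnd ℂ (a κ)

/-- Fourier coefficients of the advection term `∇⊥ψ·∇φ`, with `ψ̂ = p`, `φ̂ = q`:
`J(p,q)(κ) = −Σ_m (m₁κ₂ − m₂κ₁)·p(m)·q(κ−m)`. -/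
noncomputable def Jconv (p q : ℤ × ℤ → ℂ) (κ : ℤ × ℤ) : ℂ :=
  - ∑' m : ℤ × ℤ, ((m.1 * κ.2 - m.2 * κ.1 : ℤ) : ℂ) * p m * q (κ - m)

open scoped ENNReal NNReal

namespace WenteAux



/-- `(x^(1/2))^2 = x` in `ℝ≥0∞`. -/
lemma sq_halfpow (x : ℝ≥0∞) : (x ^ (1/2 : ℝ)) ^ 2 = x := by
  rw [← ENNReal.rpow_natCast (x ^ (1/2 : ℝ)) 2, ← ENNReal.rpow_mul]
  norm_num

/-- Cauchy–Schwarz for `tsum` in `ℝ≥0∞`. -/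
lemma tsum_cs {ι : Type*} (a b : ι → ℝ≥0∞) :
    ∑' i, a i * b i ≤ (∑' i, a i ^ 2) ^ (1/2 : ℝ) * (∑' i, b i ^ 2) ^ (1/2 : ℝ) := by
  by_cases hA : (∑' i, a i ^ 2) = ⊤
  · by_cases hB : (∑' i, b i ^ 2) = 0
    · have hb : ∀ i, b i = 0 := by
        intro i
        have h := ENNReal.tsum_eq_zero.mp hB i
        simpa [pow_eq_zero_iff] using h
      simp [hb]
    · rw [hA, ENNReal.top_rpow_of_pos (by norm_num), ENNReal.top_mul]
      · exact le_top
      · simp only [ne_eq, ENNReal.rpow_eq_zero_iff, not_or]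
        constructor
        · rintro ⟨h0, -⟩; exact hB h0
        · rintro ⟨-, hlt⟩; norm_num at hlt
  · by_cases hB : (∑' i, b i ^ 2) = ⊤
    · by_cases hA0 : (∑' i, a i ^ 2) = 0
      · have ha : ∀ i, a i = 0 := by
          intro i
          have h := ENNReal.tsum_eq_zero.mp hA0 i
          simpa [pow_eq_zero_iff] using h
        simp [ha]
      · rw [hB, ENNReal.top_rpow_of_pos (by norm_num), ENNReal.mul_top]
        · exact le_top
        · simp only [ne_eq, ENNReal.rpow_eq_zero_iff, not_or]
          constructor
          · rintro ⟨h0, -⟩; exact hA0 h0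
          · rintro ⟨-, hlt⟩; norm_num at hlt
    · have ha : ∀ i, a i ≠ ⊤ := by
        intro i h
        apply hA
        have := ENNReal.le_tsum (f := fun i => a i ^ 2) i
        rw [h] at this
        rw [pow_two, ENNReal.top_mul_top] at this
        exact top_le_iff.mp this
      have hb : ∀ i, b i ≠ ⊤ := by
        intro i h
        apply hB
        have := ENNReal.le_tsum (f := fun i => b i ^ 2) i
        rw [h] at this
        rw [pow_two, ENNReal.top_mul_top] at this
        exact top_le_iff.mp this
      rw [ENNReal.tsum_eq_iSup_sum]
      refine iSup_le fun s => ?_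
      have key := NNReal.sum_mul_le_sqrt_mul_sqrt s
        (fun i => (a i).toNNReal) (fun i => (b i).toNNReal)
      have key2 := ENNReal.coe_le_coe.2 key
      push_cast at key2
      calc ∑ i ∈ s, a i * b i
          = ∑ i ∈ s, ((a i).toNNReal : ℝ≥0∞) * ((b i).toNNReal : ℝ≥0∞) := by
            refine Finset.sum_congr rfl fun i _ => ?_
            rw [ENNReal.coe_toNNReal (ha i), ENNReal.coe_toNNReal (hb i)]
        _ ≤ (NNReal.sqrt (∑ i ∈ s, (a i).toNNReal ^ 2) : ℝ≥0∞) *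
            (NNReal.sqrt (∑ i ∈ s, (b i).toNNReal ^ 2) : ℝ≥0∞) := key2
        _ ≤ (∑' i, a i ^ 2) ^ (1/2 : ℝ) * (∑' i, b i ^ 2) ^ (1/2 : ℝ) := by
            have conv : ∀ (c : ι → ℝ≥0∞) (hc : ∀ i, c i ≠ ⊤),
                (NNReal.sqrt (∑ i ∈ s, (c i).toNNReal ^ 2) : ℝ≥0∞)
                  ≤ (∑' i, c i ^ 2) ^ (1/2 : ℝ) := by
              intro c hc
              rw [NNReal.sqrt_eq_rpow, ENNReal.coe_rpow_of_nonneg _ (by norm_num)]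
              refine ENNReal.rpow_le_rpow ?_ (by norm_num)
              push_cast
              calc (∑ i ∈ s, ((c i).toNNReal : ℝ≥0∞) ^ 2)
                  = ∑ i ∈ s, c i ^ 2 := by
                    refine Finset.sum_congr rfl fun i _ => ?_
                    rw [ENNReal.coe_toNNReal (hc i)]
                _ ≤ ∑' i, c i ^ 2 := ENNReal.sum_le_tsum s
            exact mul_le_mul' (conv a ha) (conv b hb)

/-- Triangle inequality for `tsum` of complex numbers, `ℝ≥0∞`-valued (no
summability hypotheses needed). -/
lemma enorm_tsum_le {ι : Type*} (c : ι → ℂ) :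
    ENNReal.ofReal ‖∑' i, c i‖ ≤ ∑' i, ENNReal.ofReal ‖c i‖ := by
  simp only [← coe_nnnorm, ENNReal.ofReal_coe_nnreal]
  by_cases h : Summable fun i => ‖c i‖₊
  · have hnorm : Summable fun i => ‖c i‖ := by
      rw [← NNReal.summable_coe] at h
      exact h
    have hc : Summable c := .of_norm hnorm
    rw [← ENNReal.coe_tsum h]
    apply ENNReal.coe_le_coe.2
    have := norm_tsum_le_tsum_norm hnorm
    have hco : (‖∑' i, c i‖₊ : ℝ) ≤ ((∑' i, ‖c i‖₊ : ℝ≥0) : ℝ) := by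
      rw [NNReal.coe_tsum]
      push_cast
      exact this
    exact_mod_cast hco
  · have htop : (∑' i, (‖c i‖₊ : ℝ≥0∞)) = ⊤ := by
      by_contra hne
      exact h (ENNReal.tsum_coe_ne_top_iff_summable.mp hne)
    rw [htop]
    exact le_top



/-- `√(kSq m)`, i.e. `|m|`. -/
noncomputable def RR (m : ℤ × ℤ) : ℝ := Real.sqrt (kSq m)

lemma kSq_nonneg (m : ℤ × ℤ) : 0 ≤ kSq m := by
  unfold kSq; positivity

lemma RR_nonneg (m : ℤ × ℤ) : 0 ≤ RR m := Real.sqrt_nonneg _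

lemma RR_sq (m : ℤ × ℤ) : RR m ^ 2 = kSq m := Real.sq_sqrt (kSq_nonneg m)

lemma one_le_kSq {m : ℤ × ℤ} (hm : m ≠ 0) : 1 ≤ kSq m := by
  unfold kSq
  have h : m.1 ≠ 0 ∨ m.2 ≠ 0 := by
    by_contra h
    push_neg at h
    exact hm (Prod.ext h.1 h.2)
  have h1 : (1 : ℤ) ≤ m.1 ^ 2 + m.2 ^ 2 := by
    rcases h with h | h
    · nlinarith [sq_nonneg m.2, sq_nonneg m.1, Int.one_le_abs (by simpa using h : m.1 ≠ 0), sq_abs m.1]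
    · nlinarith [sq_nonneg m.1, sq_nonneg m.2, Int.one_le_abs (by simpa using h : m.2 ≠ 0), sq_abs m.2]
  exact_mod_cast h1

lemma kSq_pos {m : ℤ × ℤ} (hm : m ≠ 0) : 0 < kSq m :=
  lt_of_lt_of_le one_pos (one_le_kSq hm)

/-- The symplectic kernel. -/
def sig (m κ : ℤ × ℤ) : ℤ := m.1 * κ.2 - m.2 * κ.1

lemma sig_sub (m κ : ℤ × ℤ) : sig (κ - m) κ = - sig m κ := by
  simp only [sig, Prod.fst_sub, Prod.snd_sub]
  ring

lemma sig_abs_le (m κ : ℤ × ℤ) : |((sig m κ : ℤ) : ℝ)| ≤ RR m * RR κ := by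
  have hsq : ((sig m κ : ℤ) : ℝ) ^ 2 ≤ kSq m * kSq κ := by
    unfold sig kSq
    push_cast
    nlinarith [sq_nonneg ((m.1 : ℝ) * κ.1 + m.2 * κ.2)]
  calc |((sig m κ : ℤ) : ℝ)| = Real.sqrt (((sig m κ : ℤ) : ℝ) ^ 2) :=
        (Real.sqrt_sq_eq_abs _).symm
    _ ≤ Real.sqrt (kSq m * kSq κ) := Real.sqrt_le_sqrt hsq
    _ = RR m * RR κ := Real.sqrt_mul (kSq_nonneg m) _


open scoped ENNReal

/-- Counting lemma: the number of lattice points `m` with `|m|² ≤ |n|²` is at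
most `9|n|²`. -/
lemma count_le (n : ℤ × ℤ) (hn : n ≠ 0) :
    ∑' m : ℤ × ℤ, (if kSq m ≤ kSq n then (1 : ℝ≥0∞) else 0)
      ≤ 9 * ENNReal.ofReal (kSq n) := by
  set N : ℤ := n.1 ^ 2 + n.2 ^ 2 with hN
  have hkn : kSq n = (N : ℝ) := rfl
  have hN1 : 1 ≤ N := by
    have := one_le_kSq hn
    rw [hkn] at this
    exact_mod_cast this
  set s : ℕ := Nat.sqrt N.toNat with hs
  have hNt : (N.toNat : ℤ) = N := Int.toNat_of_nonneg (by omega)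
  set box : Finset (ℤ × ℤ) := Finset.Icc (-(s:ℤ), -(s:ℤ)) ((s:ℤ), (s:ℤ)) with hbox
  have hvanish : ∀ m ∉ box, (if kSq m ≤ kSq n then (1 : ℝ≥0∞) else 0) = 0 := by
    intro m hm
    have hlt : kSq n < kSq m := by
      rw [Finset.mem_Icc] at hm
      simp only [Prod.le_def, not_and_or, not_le] at hm
      have hsq : (N : ℤ) < m.1 ^ 2 + m.2 ^ 2 := by
        have hkey : ∀ x : ℤ, ((s:ℤ) < x ∨ x < -(s:ℤ)) → (N : ℤ) < x ^ 2 := by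
          intro x hx
          have h1 : N.toNat < (s + 1) ^ 2 := Nat.lt_succ_sqrt' N.toNat
          have h2 : (N : ℤ) < ((s:ℤ) + 1) ^ 2 := by
            rw [← hNt]
            exact_mod_cast h1
          rcases hx with hx | hx
          · nlinarith
          · nlinarith
        have hm1 : m.1 ^ 2 ≤ m.1 ^ 2 + m.2 ^ 2 := by nlinarith [sq_nonneg m.2]
        have hm2 : m.2 ^ 2 ≤ m.1 ^ 2 + m.2 ^ 2 := by nlinarith [sq_nonneg m.1]
        rcases hm with hm | hm
        · rcases hm with hm | hm
          · exact lt_of_lt_of_le (hkey m.1 (Or.inr (by omega))) hm1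
          · exact lt_of_lt_of_le (hkey m.2 (Or.inr (by omega))) hm2
        · rcases hm with hm | hm
          · exact lt_of_lt_of_le (hkey m.1 (Or.inl hm)) hm1
          · exact lt_of_lt_of_le (hkey m.2 (Or.inl hm)) hm2
      rw [hkn]
      unfold kSq
      exact_mod_cast hsq
    rw [if_neg (not_le.mpr hlt)]
  rw [tsum_eq_sum hvanish]
  have hcard : box.card = (2 * s + 1) * (2 * s + 1) := by
    rw [hbox, Finset.card_Icc_prod]
    simp only [Int.card_Icc]
    have : ((s:ℤ) + 1 - -(s:ℤ)).toNat = 2 * s + 1 := by omega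
    rw [this]
  have hsum : ∑ m ∈ box, (if kSq m ≤ kSq n then (1 : ℝ≥0∞) else 0)
      ≤ (box.card : ℝ≥0∞) := by
    calc ∑ m ∈ box, (if kSq m ≤ kSq n then (1 : ℝ≥0∞) else 0)
        ≤ ∑ _m ∈ box, (1 : ℝ≥0∞) := by
          refine Finset.sum_le_sum fun m _ => ?_
          split <;> simp
      _ = (box.card : ℝ≥0∞) := by simp
  refine hsum.trans ?_
  rw [hcard]
  have hnat : (2 * s + 1) * (2 * s + 1) ≤ 9 * N.toNat := by
    have h1 : s ^ 2 ≤ N.toNat := Nat.sqrt_le' N.toNat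
    have h2 : s ≤ N.toNat := Nat.sqrt_le_self N.toNat
    have h3 : 1 ≤ N.toNat := by omega
    nlinarith
  have hofReal : ENNReal.ofReal (kSq n) = (N.toNat : ℝ≥0∞) := by
    have hNr : (N : ℝ) = (N.toNat : ℝ) := by exact_mod_cast hNt.symm
    rw [hkn, hNr, ENNReal.ofReal_natCast]
  rw [hofReal]
  calc (((2 * s + 1) * (2 * s + 1) : ℕ) : ℝ≥0∞)
      ≤ ((9 * N.toNat : ℕ) : ℝ≥0∞) := by exact_mod_cast hnat
    _ = 9 * (N.toNat : ℝ≥0∞) := by push_cast; ring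


open scoped ENNReal

/-- `|m|·|a(m)|` as an extended nonneg real. -/
noncomputable def Fw (a : ℤ × ℤ → ℂ) (m : ℤ × ℤ) : ℝ≥0∞ :=
  ENNReal.ofReal (RR m * ‖a m‖)

/-- `|a(m)|` as an extended nonneg real. -/
noncomputable def Pw (a : ℤ × ℤ → ℂ) (m : ℤ × ℤ) : ℝ≥0∞ :=
  ENNReal.ofReal (‖a m‖)

/-- The squared `H¹` norm as an extended nonneg real. -/
noncomputable def S2 (a : ℤ × ℤ → ℂ) : ℝ≥0∞ := ∑' m, (Fw a m) ^ 2

noncomputable def Aw (q : ℤ × ℤ → ℂ) (κ : ℤ × ℤ) : ℝ≥0∞ :=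
  ∑' m, if kSq m ≤ kSq (κ - m) then (Pw q (κ - m)) ^ 2 else 0

noncomputable def Bw (p : ℤ × ℤ → ℂ) (κ : ℤ × ℤ) : ℝ≥0∞ :=
  ∑' m, if kSq m ≤ kSq (κ - m) then 0 else (Pw p m) ^ 2

lemma sobTerm_nonneg (s : ℝ) (a : ℤ × ℤ → ℂ) (κ : ℤ × ℤ) : 0 ≤ sobTerm s a κ := by
  rw [sobTerm]
  split
  · exact le_rfl
  · exact mul_nonneg (Real.rpow_nonneg (kSq_nonneg _) s)
      (pow_nonneg (norm_nonneg _) 2)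

lemma sobNormSq_nonneg (s : ℝ) (a : ℤ × ℤ → ℂ) : 0 ≤ sobNormSq s a :=
  tsum_nonneg (sobTerm_nonneg s a)

lemma Fw_sq (a : ℤ × ℤ → ℂ) (ha : a 0 = 0) (m : ℤ × ℤ) :
    (Fw a m) ^ 2 = ENNReal.ofReal (sobTerm 1 a m) := by
  by_cases hm : m = 0
  · subst hm
    simp [Fw, sobTerm, ha]
  · rw [Fw, ← ENNReal.ofReal_pow (mul_nonneg (RR_nonneg _) (norm_nonneg _))]
    congr 1
    rw [sobTerm, if_neg hm, Real.rpow_one, mul_pow, RR_sq]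

lemma S2_eq (a : ℤ × ℤ → ℂ) (ha : a 0 = 0) (hs : Summable (sobTerm 1 a)) :
    S2 a = ENNReal.ofReal (sobNormSq 1 a) := by
  rw [S2, sobNormSq, ENNReal.ofReal_tsum_of_nonneg (fun m => sobTerm_nonneg 1 a m) hs]
  exact tsum_congr fun m => Fw_sq a ha m

/-- Sum of `Aw` over all frequencies. -/
lemma sum_Aw_le (q : ℤ × ℤ → ℂ) (hq : q 0 = 0) : ∑' κ, Aw q κ ≤ 9 * S2 q := by
  have step1 : ∑' κ, Aw q κ
      = ∑' (m : ℤ × ℤ) (κ : ℤ × ℤ),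
          (if kSq m ≤ kSq (κ - m) then (Pw q (κ - m)) ^ 2 else 0) := by
    simp only [Aw]
    exact ENNReal.tsum_comm
  have step2 : ∀ m : ℤ × ℤ, ∑' κ : ℤ × ℤ,
      (if kSq m ≤ kSq (κ - m) then (Pw q (κ - m)) ^ 2 else 0)
      = ∑' n : ℤ × ℤ, (if kSq m ≤ kSq n then (Pw q n) ^ 2 else 0) := by
    intro m
    rw [← (Equiv.addRight m).tsum_eq
      (fun κ => if kSq m ≤ kSq (κ - m) then (Pw q (κ - m)) ^ 2 else 0)]
    simp [Equiv.addRight]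
  have step3 : ∑' κ, Aw q κ
      = ∑' (n : ℤ × ℤ) (m : ℤ × ℤ), (if kSq m ≤ kSq n then (Pw q n) ^ 2 else 0) := by
    rw [step1]
    rw [tsum_congr step2]
    exact ENNReal.tsum_comm
  rw [step3]
  have step4 : ∀ n : ℤ × ℤ,
      (∑' m : ℤ × ℤ, (if kSq m ≤ kSq n then (Pw q n) ^ 2 else 0))
        ≤ 9 * (Fw q n) ^ 2 := by
    intro n
    by_cases hn : n = 0
    · subst hn
      have : ∀ m : ℤ × ℤ, (if kSq m ≤ kSq 0 then (Pw q 0) ^ 2 else 0) = 0 := by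
        intro m
        simp [Pw, hq]
      rw [tsum_congr this]
      simp
    · have hrw : ∀ m : ℤ × ℤ, (if kSq m ≤ kSq n then (Pw q n) ^ 2 else 0)
          = (Pw q n) ^ 2 * (if kSq m ≤ kSq n then (1 : ℝ≥0∞) else 0) := by
        intro m; split <;> simp
      rw [tsum_congr hrw, ENNReal.tsum_mul_left]
      calc (Pw q n) ^ 2 * ∑' m : ℤ × ℤ, (if kSq m ≤ kSq n then (1 : ℝ≥0∞) else 0)
          ≤ (Pw q n) ^ 2 * (9 * ENNReal.ofReal (kSq n)) := by
            exact mul_le_mul_right (count_le n hn) _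
        _ = 9 * (Fw q n) ^ 2 := by
            rw [Fw, ← ENNReal.ofReal_pow (mul_nonneg (RR_nonneg _) (norm_nonneg _)), mul_pow, RR_sq,
              ENNReal.ofReal_mul (kSq_nonneg n), Pw,
              ENNReal.ofReal_pow (by positivity)]
            ring
  calc ∑' (n : ℤ × ℤ) (m : ℤ × ℤ), (if kSq m ≤ kSq n then (Pw q n) ^ 2 else 0)
      ≤ ∑' n : ℤ × ℤ, 9 * (Fw q n) ^ 2 := ENNReal.tsum_le_tsum step4
    _ = 9 * S2 q := by rw [ENNReal.tsum_mul_left, S2]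

/-- Sum of `Bw` over all frequencies. -/
lemma sum_Bw_le (p : ℤ × ℤ → ℂ) (hp : p 0 = 0) : ∑' κ, Bw p κ ≤ 9 * S2 p := by
  have step1 : ∑' κ, Bw p κ
      = ∑' (m : ℤ × ℤ) (κ : ℤ × ℤ),
          (if kSq m ≤ kSq (κ - m) then 0 else (Pw p m) ^ 2) := by
    simp only [Bw]
    exact ENNReal.tsum_comm
  have step2 : ∀ m : ℤ × ℤ, ∑' κ : ℤ × ℤ,
      (if kSq m ≤ kSq (κ - m) then 0 else (Pw p m) ^ 2)
      = ∑' n : ℤ × ℤ, (if kSq m ≤ kSq n then 0 else (Pw p m) ^ 2) := by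
    intro m
    rw [← (Equiv.addRight m).tsum_eq
      (fun κ => if kSq m ≤ kSq (κ - m) then 0 else (Pw p m) ^ 2)]
    simp [Equiv.addRight]
  rw [step1, tsum_congr step2]
  have step4 : ∀ m : ℤ × ℤ,
      (∑' n : ℤ × ℤ, (if kSq m ≤ kSq n then 0 else (Pw p m) ^ 2))
        ≤ 9 * (Fw p m) ^ 2 := by
    intro m
    by_cases hm : m = 0
    · subst hm
      have : ∀ n : ℤ × ℤ, (if kSq 0 ≤ kSq n then 0 else (Pw p 0) ^ 2) = 0 := by
        intro n
        simp [Pw, hp]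
      rw [tsum_congr this]
      simp
    · have hrw : ∀ n : ℤ × ℤ, (if kSq m ≤ kSq n then 0 else (Pw p m) ^ 2)
          ≤ (Pw p m) ^ 2 * (if kSq n ≤ kSq m then (1 : ℝ≥0∞) else 0) := by
        intro n
        by_cases h : kSq m ≤ kSq n
        · simp [h]
        · rw [if_neg h, if_pos (le_of_lt (lt_of_not_ge h)), mul_one]
      calc ∑' n : ℤ × ℤ, (if kSq m ≤ kSq n then 0 else (Pw p m) ^ 2)
          ≤ ∑' n : ℤ × ℤ, (Pw p m) ^ 2 * (if kSq n ≤ kSq m then (1 : ℝ≥0∞) else 0) :=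
            ENNReal.tsum_le_tsum hrw
        _ = (Pw p m) ^ 2 * ∑' n : ℤ × ℤ, (if kSq n ≤ kSq m then (1 : ℝ≥0∞) else 0) :=
            ENNReal.tsum_mul_left
        _ ≤ (Pw p m) ^ 2 * (9 * ENNReal.ofReal (kSq m)) :=
            mul_le_mul_right (count_le m hm) _
        _ = 9 * (Fw p m) ^ 2 := by
            rw [Fw, ← ENNReal.ofReal_pow (mul_nonneg (RR_nonneg _) (norm_nonneg _)), mul_pow, RR_sq,
              ENNReal.ofReal_mul (kSq_nonneg m), Pw,
              ENNReal.ofReal_pow (by positivity)]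
            ring
  calc ∑' (m : ℤ × ℤ) (n : ℤ × ℤ), (if kSq m ≤ kSq n then 0 else (Pw p m) ^ 2)
      ≤ ∑' m : ℤ × ℤ, 9 * (Fw p m) ^ 2 := ENNReal.tsum_le_tsum step4
    _ = 9 * S2 p := by rw [ENNReal.tsum_mul_left, S2]

lemma abs_intCast_complex (k : ℤ) : ‖((k : ℤ) : ℂ)‖ = |((k : ℤ) : ℝ)| := by
  have h : ((k : ℤ) : ℂ) = (((k : ℤ) : ℝ) : ℂ) := by push_cast; ring
  rw [h, Complex.norm_real, Real.norm_eq_abs]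

/-- The key pointwise estimate: for every frequency `κ`, the `κ`-th term of the
squared `H⁻¹` norm of `J(p,q)` is controlled. -/
lemma key_estimate (p q : ℤ × ℤ → ℂ) (_hp : p 0 = 0) (_hq : q 0 = 0) (κ : ℤ × ℤ) :
    ENNReal.ofReal (sobTerm (-1) (Jconv p q) κ)
      ≤ 4 * (S2 p * Aw q κ) + 4 * (S2 q * Bw p κ) := by
  by_cases hκ : κ = 0
  · subst hκ
    simp [sobTerm]
  -- notation
  set H1 : ℝ≥0∞ := ∑' m : ℤ × ℤ,
    (if kSq m ≤ kSq (κ - m) then Fw p m * Pw q (κ - m) else 0) with hH1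
  set H2 : ℝ≥0∞ := ∑' m : ℤ × ℤ,
    (if kSq m ≤ kSq (κ - m) then 0 else Pw p m * Fw q (κ - m)) with hH2
  -- step ii : bound on the norm of J
  have stepJ : ENNReal.ofReal ‖Jconv p q κ‖ ≤ ENNReal.ofReal (RR κ) * (H1 + H2) := by
    have h0 : ENNReal.ofReal ‖Jconv p q κ‖
        = ENNReal.ofReal ‖∑' m : ℤ × ℤ, ((sig m κ : ℤ) : ℂ) * p m * q (κ - m)‖ := by
      rw [Jconv, norm_neg]
      rfl
    rw [h0]
    refine (enorm_tsum_le _).trans ?_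
    have hpt : ∀ m : ℤ × ℤ, ENNReal.ofReal ‖((sig m κ : ℤ) : ℂ) * p m * q (κ - m)‖
        ≤ ENNReal.ofReal (RR κ) *
          ((if kSq m ≤ kSq (κ - m) then Fw p m * Pw q (κ - m) else 0) +
           (if kSq m ≤ kSq (κ - m) then 0 else Pw p m * Fw q (κ - m))) := by
      intro m
      have hre : ‖((sig m κ : ℤ) : ℂ) * p m * q (κ - m)‖
          = |((sig m κ : ℤ) : ℝ)| * ‖p m‖ * ‖q (κ - m)‖ := by
        rw [norm_mul, norm_mul,
          abs_intCast_complex]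
      rw [hre]
      by_cases hc : kSq m ≤ kSq (κ - m)
      · rw [if_pos hc, if_pos hc, add_zero]
        have hb : |((sig m κ : ℤ) : ℝ)| * ‖p m‖ * ‖q (κ - m)‖
            ≤ RR κ * ((RR m * ‖p m‖) * ‖q (κ - m)‖) := by
          have h1 := sig_abs_le m κ
          nlinarith [norm_nonneg (p m), norm_nonneg (q (κ - m)),
            RR_nonneg m, RR_nonneg κ, abs_nonneg ((sig m κ : ℤ) : ℝ),
            mul_le_mul_of_nonneg_right h1
              (mul_nonneg (norm_nonneg (p m)) (norm_nonneg (q (κ - m))))]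
        refine (ENNReal.ofReal_le_ofReal hb).trans ?_
        rw [ENNReal.ofReal_mul (RR_nonneg κ), Fw, Pw,
          ENNReal.ofReal_mul (mul_nonneg (RR_nonneg m) (norm_nonneg _))]
      · rw [if_neg hc, if_neg hc, zero_add]
        have hsig : |((sig m κ : ℤ) : ℝ)| ≤ RR (κ - m) * RR κ := by
          have h1 := sig_abs_le (κ - m) κ
          have h2 : ((sig (κ - m) κ : ℤ) : ℝ) = -((sig m κ : ℤ) : ℝ) := by
            rw [sig_sub m κ]; push_cast; ring
          rwa [h2, abs_neg] at h1
        have hb : |((sig m κ : ℤ) : ℝ)| * ‖p m‖ * ‖q (κ - m)‖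
            ≤ RR κ * (‖p m‖ * (RR (κ - m) * ‖q (κ - m)‖)) := by
          nlinarith [norm_nonneg (p m), norm_nonneg (q (κ - m)),
            RR_nonneg (κ - m), RR_nonneg κ, abs_nonneg ((sig m κ : ℤ) : ℝ),
            mul_le_mul_of_nonneg_right hsig
              (mul_nonneg (norm_nonneg (p m)) (norm_nonneg (q (κ - m))))]
        refine (ENNReal.ofReal_le_ofReal hb).trans ?_
        rw [ENNReal.ofReal_mul (RR_nonneg κ), Fw, Pw,
          ENNReal.ofReal_mul (norm_nonneg _)]
    refine (ENNReal.tsum_le_tsum hpt).trans ?_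
    rw [ENNReal.tsum_mul_left, ENNReal.tsum_add]
  -- step i and iii : express sobTerm and combine
  have hkpos : 0 < kSq κ := kSq_pos hκ
  have hterm : ENNReal.ofReal (sobTerm (-1) (Jconv p q) κ)
      = (ENNReal.ofReal (kSq κ))⁻¹ * (ENNReal.ofReal ‖Jconv p q κ‖) ^ 2 := by
    rw [sobTerm, if_neg hκ, Real.rpow_neg_one,
      ENNReal.ofReal_mul (inv_nonneg.mpr (le_of_lt hkpos)),
      ENNReal.ofReal_inv_of_pos hkpos,
      ENNReal.ofReal_pow (norm_nonneg _)]
  have hsq : (ENNReal.ofReal ‖Jconv p q κ‖) ^ 2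
      ≤ ENNReal.ofReal (kSq κ) * (H1 + H2) ^ 2 := by
    calc (ENNReal.ofReal ‖Jconv p q κ‖) ^ 2
        ≤ (ENNReal.ofReal (RR κ) * (H1 + H2)) ^ 2 := by
          exact pow_le_pow_left' stepJ 2
      _ = ENNReal.ofReal (kSq κ) * (H1 + H2) ^ 2 := by
          rw [mul_pow, ← ENNReal.ofReal_pow (RR_nonneg κ), RR_sq]
  have hfinal : ENNReal.ofReal (sobTerm (-1) (Jconv p q) κ) ≤ (H1 + H2) ^ 2 := by
    rw [hterm]
    calc (ENNReal.ofReal (kSq κ))⁻¹ * (ENNReal.ofReal ‖Jconv p q κ‖) ^ 2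
        ≤ (ENNReal.ofReal (kSq κ))⁻¹ * (ENNReal.ofReal (kSq κ) * (H1 + H2) ^ 2) :=
          mul_le_mul_right hsq _
      _ = ((ENNReal.ofReal (kSq κ))⁻¹ * ENNReal.ofReal (kSq κ)) * (H1 + H2) ^ 2 := by
          ring
      _ = (H1 + H2) ^ 2 := by
          rw [ENNReal.inv_mul_cancel (ne_of_gt (ENNReal.ofReal_pos.mpr hkpos))
            ENNReal.ofReal_ne_top, one_mul]
  refine hfinal.trans ?_
  -- step iv : (H1+H2)² ≤ 4 H1² + 4 H2²
  have hsum4 : (H1 + H2) ^ 2 ≤ 4 * H1 ^ 2 + 4 * H2 ^ 2 := by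
    rcases le_total H1 H2 with h | h
    · calc (H1 + H2) ^ 2 ≤ (H2 + H2) ^ 2 := pow_le_pow_left' (add_le_add_left h _) 2
        _ = 4 * H2 ^ 2 := by ring
        _ ≤ 4 * H1 ^ 2 + 4 * H2 ^ 2 := le_add_self
    · calc (H1 + H2) ^ 2 ≤ (H1 + H1) ^ 2 := pow_le_pow_left' (add_le_add_right h _) 2
        _ = 4 * H1 ^ 2 := by ring
        _ ≤ 4 * H1 ^ 2 + 4 * H2 ^ 2 := le_self_add
  refine hsum4.trans ?_
  -- step v : Cauchy–Schwarz for H1 and H2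
  have hH1sq : H1 ^ 2 ≤ S2 p * Aw q κ := by
    have hprod : ∀ m : ℤ × ℤ,
        (if kSq m ≤ kSq (κ - m) then Fw p m * Pw q (κ - m) else 0)
        = (if kSq m ≤ kSq (κ - m) then Fw p m else 0) *
          (if kSq m ≤ kSq (κ - m) then Pw q (κ - m) else 0) := by
      intro m; split <;> simp
    have hcs := tsum_cs (fun m : ℤ × ℤ => if kSq m ≤ kSq (κ - m) then Fw p m else 0)
      (fun m : ℤ × ℤ => if kSq m ≤ kSq (κ - m) then Pw q (κ - m) else 0)
    have h1 : (∑' m : ℤ × ℤ, (if kSq m ≤ kSq (κ - m) then Fw p m else 0) ^ 2)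
        ≤ S2 p := by
      refine ENNReal.tsum_le_tsum fun m => ?_
      split <;> simp
    have h2 : (∑' m : ℤ × ℤ, (if kSq m ≤ kSq (κ - m) then Pw q (κ - m) else 0) ^ 2)
        = Aw q κ := by
      refine tsum_congr fun m => ?_
      split <;> simp
    rw [hH1, tsum_congr hprod]
    calc (∑' m : ℤ × ℤ, (if kSq m ≤ kSq (κ - m) then Fw p m else 0) *
            (if kSq m ≤ kSq (κ - m) then Pw q (κ - m) else 0)) ^ 2
        ≤ ((∑' m : ℤ × ℤ, (if kSq m ≤ kSq (κ - m) then Fw p m else 0) ^ 2) ^ (1/2 : ℝ) *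
           (∑' m : ℤ × ℤ, (if kSq m ≤ kSq (κ - m) then Pw q (κ - m) else 0) ^ 2) ^ (1/2 : ℝ)) ^ 2 :=
          pow_le_pow_left' hcs 2
      _ = (∑' m : ℤ × ℤ, (if kSq m ≤ kSq (κ - m) then Fw p m else 0) ^ 2) *
          (∑' m : ℤ × ℤ, (if kSq m ≤ kSq (κ - m) then Pw q (κ - m) else 0) ^ 2) := by
          rw [mul_pow, sq_halfpow, sq_halfpow]
      _ ≤ S2 p * Aw q κ := by
          rw [h2]
          exact mul_le_mul_left h1 _
  have hH2sq : H2 ^ 2 ≤ S2 q * Bw p κ := by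
    have hprod : ∀ m : ℤ × ℤ,
        (if kSq m ≤ kSq (κ - m) then 0 else Pw p m * Fw q (κ - m))
        = (if kSq m ≤ kSq (κ - m) then 0 else Pw p m) *
          (if kSq m ≤ kSq (κ - m) then 0 else Fw q (κ - m)) := by
      intro m; split <;> simp
    have hcs := tsum_cs (fun m : ℤ × ℤ => if kSq m ≤ kSq (κ - m) then 0 else Pw p m)
      (fun m : ℤ × ℤ => if kSq m ≤ kSq (κ - m) then 0 else Fw q (κ - m))
    have h1 : (∑' m : ℤ × ℤ, (if kSq m ≤ kSq (κ - m) then 0 else Pw p m) ^ 2)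
        = Bw p κ := by
      refine tsum_congr fun m => ?_
      split <;> simp
    have h2 : (∑' m : ℤ × ℤ, (if kSq m ≤ kSq (κ - m) then 0 else Fw q (κ - m)) ^ 2)
        ≤ S2 q := by
      have hmono : (∑' m : ℤ × ℤ, (if kSq m ≤ kSq (κ - m) then 0 else Fw q (κ - m)) ^ 2)
          ≤ ∑' m : ℤ × ℤ, Fw q (κ - m) ^ 2 := by
        refine ENNReal.tsum_le_tsum fun m => ?_
        split <;> simp
      refine hmono.trans_eq ?_
      rw [S2]
      exact (Equiv.subLeft κ).tsum_eq (fun n => Fw q n ^ 2)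
    rw [hH2, tsum_congr hprod]
    calc (∑' m : ℤ × ℤ, (if kSq m ≤ kSq (κ - m) then 0 else Pw p m) *
            (if kSq m ≤ kSq (κ - m) then 0 else Fw q (κ - m))) ^ 2
        ≤ ((∑' m : ℤ × ℤ, (if kSq m ≤ kSq (κ - m) then 0 else Pw p m) ^ 2) ^ (1/2 : ℝ) *
           (∑' m : ℤ × ℤ, (if kSq m ≤ kSq (κ - m) then 0 else Fw q (κ - m)) ^ 2) ^ (1/2 : ℝ)) ^ 2 :=
          pow_le_pow_left' hcs 2
      _ = (∑' m : ℤ × ℤ, (if kSq m ≤ kSq (κ - m) then 0 else Pw p m) ^ 2) *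
          (∑' m : ℤ × ℤ, (if kSq m ≤ kSq (κ - m) then 0 else Fw q (κ - m)) ^ 2) := by
          rw [mul_pow, sq_halfpow, sq_halfpow]
      _ ≤ S2 q * Bw p κ := by
          rw [h1, mul_comm]
          exact mul_le_mul_left h2 _
  exact add_le_add (mul_le_mul_right hH1sq 4) (mul_le_mul_right hH2sq 4)
end WenteAux

open WenteAux in
/-- Wente estimate `‖∇⊥ψ·∇φ‖_{H^{−1}} ≤ C_w·‖ψ‖_{H¹}·‖φ‖_{H¹}` for mean-zero
periodic fields, in terms of Fourier coefficients. -/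
theorem wente_Hm1_H1_H1 :
    ∃ Cw : ℝ, 1 ≤ Cw ∧
      ∀ p q : ℤ × ℤ → ℂ, MeanZeroField p → MeanZeroField q →
        SobSummable 1 p → SobSummable 1 q →
        SobSummable (-1) (Jconv p q) ∧
        sobNorm (-1) (Jconv p q) ≤ Cw * sobNorm 1 p * sobNorm 1 q := by
  refine ⟨9, by norm_num, ?_⟩
  intro p q hP hQ hp1 hq1
  obtain ⟨hp0, -⟩ := hP
  obtain ⟨hq0, -⟩ := hQ
  have hS2p : S2 p = ENNReal.ofReal (sobNormSq 1 p) := S2_eq p hp0 hp1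
  have hS2q : S2 q = ENNReal.ofReal (sobNormSq 1 q) := S2_eq q hq0 hq1
  have hsum_bound : ∑' κ : ℤ × ℤ, ENNReal.ofReal (sobTerm (-1) (Jconv p q) κ)
      ≤ 72 * S2 p * S2 q := by
    calc ∑' κ : ℤ × ℤ, ENNReal.ofReal (sobTerm (-1) (Jconv p q) κ)
        ≤ ∑' κ : ℤ × ℤ, (4 * (S2 p * Aw q κ) + 4 * (S2 q * Bw p κ)) :=
          ENNReal.tsum_le_tsum (key_estimate p q hp0 hq0)
      _ = 4 * (S2 p * ∑' κ, Aw q κ) + 4 * (S2 q * ∑' κ, Bw p κ) := by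
          rw [ENNReal.tsum_add]
          congr 1
          · rw [ENNReal.tsum_mul_left, ENNReal.tsum_mul_left]
          · rw [ENNReal.tsum_mul_left, ENNReal.tsum_mul_left]
      _ ≤ 4 * (S2 p * (9 * S2 q)) + 4 * (S2 q * (9 * S2 p)) := by
          exact add_le_add
            (mul_le_mul_right (mul_le_mul_right (sum_Aw_le q hq0) _) _)
            (mul_le_mul_right (mul_le_mul_right (sum_Bw_le p hp0) _) _)
      _ = 72 * S2 p * S2 q := by ring
  have htop : (72 : ℝ≥0∞) * S2 p * S2 q ≠ ⊤ := by
    rw [hS2p, hS2q]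
    exact ENNReal.mul_ne_top
      (ENNReal.mul_ne_top (by simp) ENNReal.ofReal_ne_top) ENNReal.ofReal_ne_top
  have hne : ∑' κ : ℤ × ℤ, ENNReal.ofReal (sobTerm (-1) (Jconv p q) κ) ≠ ⊤ :=
    ne_top_of_le_ne_top htop hsum_bound
  have hsummable : SobSummable (-1) (Jconv p q) := by
    have hsum := ENNReal.summable_toReal hne
    refine hsum.congr fun κ => ?_
    exact ENNReal.toReal_ofReal (sobTerm_nonneg _ _ _)
  refine ⟨hsummable, ?_⟩
  have hofReal_eq : ENNReal.ofReal (sobNormSq (-1) (Jconv p q))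
      = ∑' κ : ℤ × ℤ, ENNReal.ofReal (sobTerm (-1) (Jconv p q) κ) :=
    ENNReal.ofReal_tsum_of_nonneg (sobTerm_nonneg _ _) hsummable
  have hreal : sobNormSq (-1) (Jconv p q) ≤ 72 * sobNormSq 1 p * sobNormSq 1 q := by
    have h1 : ENNReal.ofReal (sobNormSq (-1) (Jconv p q))
        ≤ ENNReal.ofReal (72 * sobNormSq 1 p * sobNormSq 1 q) := by
      rw [hofReal_eq]
      refine hsum_bound.trans_eq ?_
      rw [ENNReal.ofReal_mul (mul_nonneg (by norm_num) (sobNormSq_nonneg 1 p)),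
        ENNReal.ofReal_mul (by norm_num : (0:ℝ) ≤ 72), hS2p, hS2q]
      norm_num
    exact (ENNReal.ofReal_le_ofReal_iff
      (mul_nonneg (mul_nonneg (by norm_num) (sobNormSq_nonneg 1 p))
        (sobNormSq_nonneg 1 q))).mp h1
  rw [sobNorm, sobNorm, sobNorm]
  calc Real.sqrt (sobNormSq (-1) (Jconv p q))
      ≤ Real.sqrt (72 * sobNormSq 1 p * sobNormSq 1 q) := Real.sqrt_le_sqrt hreal
    _ = Real.sqrt 72 * Real.sqrt (sobNormSq 1 p) * Real.sqrt (sobNormSq 1 q) := by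
        rw [Real.sqrt_mul (mul_nonneg (by norm_num) (sobNormSq_nonneg 1 p)),
          Real.sqrt_mul (by norm_num : (0:ℝ) ≤ 72)]
    _ ≤ 9 * Real.sqrt (sobNormSq 1 p) * Real.sqrt (sobNormSq 1 q) := by
        have h72 : Real.sqrt 72 ≤ 9 := by
          have h81 : (9:ℝ) = Real.sqrt 81 := by
            rw [show (81:ℝ) = 9 ^ 2 by norm_num, Real.sqrt_sq (by norm_num)]
          rw [h81]
          exact Real.sqrt_le_sqrt (by norm_num)
        exact mul_le_mul_of_nonneg_right
          (mul_le_mul_of_nonneg_right h72 (Real.sqrt_nonneg _)) (Real.sqrt_nonneg _)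
end

section
/- Let ν > 0, k > 0 with νk ≤ 1, let A > 0 and ρ₀ > 0, and let (gₙ)_{n≥0}, (dₙ)_{n≥1} be sequences of nonnegative real numbers satisfying, for every n ≥ 1, gₙ − gₙ₋₁/(1+νk) + (ν/2 − A·k·gₙ₋₁)·k·dₙ ≤ (ν/2)·k·ρ₀². Set M² := max{g₀, ρ₀²}. If 2·A·k·M² ≤ ν, then for every n ≥ 0: gₙ ≤ (1+νk)^{−n}·g₀ + ρ₀²·(1 − (1+νk)^{−n}) ≤ M². -/
/-- The inductive lemma at the core of the uniform-in-time L² bound for the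
BDF2–AB2 scheme: `g n` plays the role of the squared generalized G-norm of the
solution pair, `d n` the squared H¹ norm of the new iterate, and
`2·A·k·M² ≤ ν` is the time-step restriction. -/
theorem inductive_uniform_bound (ν k A ρ₀ : ℝ)
    (hν : 0 < ν) (hk : 0 < k) (hνk : ν * k ≤ 1) (hA : 0 < A) (hρ₀ : 0 < ρ₀)
    (g : ℕ → ℝ) (d : ℕ → ℝ) (hg : ∀ n, 0 ≤ g n) (hd : ∀ n, 1 ≤ n → 0 ≤ d n)
    (hrec : ∀ n, 1 ≤ n →
      g n - g (n-1) / (1+ν*k) + (ν/2 - A*k*(g (n-1))) * k * d n ≤ (ν/2)*k*ρ₀^2)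
    (hstep : 2*A*k*(max (g 0) (ρ₀^2)) ≤ ν) :
    ∀ n : ℕ,
      g n ≤ ((1+ν*k)^n)⁻¹ * g 0 + ρ₀^2 * (1 - ((1+ν*k)^n)⁻¹) ∧
      ((1+ν*k)^n)⁻¹ * g 0 + ρ₀^2 * (1 - ((1+ν*k)^n)⁻¹) ≤ max (g 0) (ρ₀^2) := by
  have hP : (0:ℝ) < 1 + ν * k := by nlinarith
  have hP1 : (1:ℝ) ≤ 1 + ν * k := by nlinarith
  -- second part holds for any n
  have hsec : ∀ n : ℕ,
      ((1+ν*k)^n)⁻¹ * g 0 + ρ₀^2 * (1 - ((1+ν*k)^n)⁻¹) ≤ max (g 0) (ρ₀^2) := by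
    intro n
    set t : ℝ := ((1+ν*k)^n)⁻¹ with ht
    have htpos : 0 < t := by positivity
    have ht1 : t ≤ 1 := by
      rw [ht]
      apply inv_le_one_of_one_le₀
      exact one_le_pow₀ hP1
    have h1 : g 0 ≤ max (g 0) (ρ₀^2) := le_max_left _ _
    have h2 : ρ₀^2 ≤ max (g 0) (ρ₀^2) := le_max_right _ _
    nlinarith [mul_le_mul_of_nonneg_left h1 htpos.le,
      mul_le_mul_of_nonneg_left h2 (by linarith : (0:ℝ) ≤ 1 - t)]
  intro n
  induction n with
  | zero => simp
  | succ n ih =>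
    refine ⟨?_, hsec (n+1)⟩
    set t : ℝ := ((1+ν*k)^n)⁻¹ with ht
    have htpos : 0 < t := by positivity
    have hsucc : ((1+ν*k)^(n+1))⁻¹ = t / (1+ν*k) := by
      rw [ht, pow_succ, mul_inv, div_eq_mul_inv]
    have hgM : g n ≤ max (g 0) (ρ₀^2) := le_trans ih.1 (hsec n)
    have hrec' := hrec (n+1) (by omega)
    simp only [Nat.add_sub_cancel] at hrec'
    have hnn : 0 ≤ (ν/2 - A*k*(g n)) * k * d (n+1) := by
      have h1 : A*k*(g n) ≤ ν/2 := by
        have := mul_le_mul_of_nonneg_left hgM (by positivity : (0:ℝ) ≤ A*k)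
        linarith
      have h2 := hd (n+1) (by omega)
      have : 0 ≤ ν/2 - A*k*(g n) := by linarith
      positivity
    -- g (n+1) ≤ g n / (1+νk) + (ν/2)kρ₀²
    have hstep1 : g (n+1) ≤ g n / (1+ν*k) + (ν/2)*k*ρ₀^2 := by linarith
    rw [hsucc]
    have hih := ih.1
    have hdiv : g n / (1+ν*k) ≤ (t * g 0 + ρ₀^2 * (1-t)) / (1+ν*k) := by
      gcongr
    have key : (t * g 0 + ρ₀^2 * (1-t)) / (1+ν*k) + (ν/2)*k*ρ₀^2
        ≤ t / (1+ν*k) * g 0 + ρ₀^2 * (1 - t / (1+ν*k)) := by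
      have haux : (1-t)/(1+ν*k) + (ν/2)*k ≤ 1 - t/(1+ν*k) := by
        have heq : 1 - t/(1+ν*k) - ((1-t)/(1+ν*k) + (ν/2)*k)
            = ν*k*(1-ν*k)/(2*(1+ν*k)) := by
          field_simp
          ring
        have hpos : 0 ≤ ν*k*(1-ν*k)/(2*(1+ν*k)) := by
          apply div_nonneg
          · nlinarith
          · linarith
        linarith
      have hmul := mul_le_mul_of_nonneg_left haux (sq_nonneg ρ₀)
      have heq2 : (t * g 0 + ρ₀^2 * (1-t)) / (1+ν*k) + (ν/2)*k*ρ₀^2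
          = t / (1+ν*k) * g 0 + ρ₀^2 * ((1-t)/(1+ν*k) + (ν/2)*k) := by
        ring
      rw [heq2]
      linarith
    calc g (n+1) ≤ g n / (1+ν*k) + (ν/2)*k*ρ₀^2 := hstep1
      _ ≤ (t * g 0 + ρ₀^2 * (1-t)) / (1+ν*k) + (ν/2)*k*ρ₀^2 := by linarith
      _ ≤ _ := key
end
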